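/- Let f, g ∈ k[x] be monic univariate polynomials of degrees a and b with a ≤ b, over a field k, and let 0 ≤ p < a. The truncated Sylvester matrix Syl_p(f,g) (the first a+b-p rows of the Sylvester matrix) has kernel of dimension ≥ p+1 if and only if gcd(f,g) has degree ≥ p+1. -/

import Mathlib

/-- The matrix consisting of the first `a + b - p` rows of the Sylvester matrix of `f` and `g`
(rows record the coefficients of `x^(a+b-1)` down to `x^p` of `A·f + B·g`; the columns indexed
by `Fin b` correspond to `x^j·f`, those indexed by `Fin a` to `x^i·g`). -/
noncomputable def sylMat {k : Type*} [Field k] (f g : Polynomial k) (a b p : ℕ) :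
    Matrix (Fin (a + b - p)) (Fin b ⊕ Fin a) k := fun r c =>
  Sum.elim
    (fun j : Fin b => if (j : ℕ) ≤ a + b - 1 - (r : ℕ) then
      f.coeff (a + b - 1 - (r : ℕ) - (j : ℕ)) else 0)
    (fun i : Fin a => if (i : ℕ) ≤ a + b - 1 - (r : ℕ) then
      g.coeff (a + b - 1 - (r : ℕ) - (i : ℕ)) else 0) c

open Polynomial in
lemma poly_eq_fin_sum {K : Type*} [Field K] (A : K[X]) {n : ℕ} (hA : A.degree < (n : ℕ)) :
    A = ∑ j : Fin n, Polynomial.C (A.coeff j) * Polynomial.X ^ (j : ℕ) := by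
  by_cases h0 : A = 0
  · simp [h0]
  have hn : A.natDegree < n := (Polynomial.natDegree_lt_iff_degree_lt h0).2 hA
  conv_lhs => rw [A.as_sum_range' n hn]
  rw [← Fin.sum_univ_eq_sum_range (fun i => Polynomial.monomial i (A.coeff i)) n]
  exact Finset.sum_congr rfl fun j _ => by rw [Polynomial.C_mul_X_pow_eq_monomial]

open Polynomial in
lemma coeff_mul_fin_sum {K : Type*} [Field K] (A f : K[X]) {n : ℕ} (hA : A.degree < (n : ℕ))
    (N : ℕ) :
    (A * f).coeff N = ∑ j : Fin n, (if (j : ℕ) ≤ N then f.coeff (N - (j : ℕ)) else 0) * A.coeff j := by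
  conv_lhs => rw [poly_eq_fin_sum A hA]
  rw [Finset.sum_mul, Polynomial.finset_sum_coeff]
  refine Finset.sum_congr rfl fun j _ => ?_
  rw [mul_right_comm, Polynomial.coeff_mul_X_pow', Polynomial.coeff_C_mul]
  split_ifs <;> ring

open Polynomial in
lemma sylMat_mulVec {K : Type*} [Field K] (f g : K[X]) (a b p : ℕ) (A B : K[X])
    (hA : A.degree < (b : ℕ)) (hB : B.degree < (a : ℕ)) (r : Fin (a + b - p)) :
    (sylMat f g a b p).mulVecLin
      (Sum.elim (fun j : Fin b => A.coeff j) (fun i : Fin a => B.coeff i)) r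
      = (A * f + B * g).coeff (a + b - 1 - (r : ℕ)) := by
  rw [Polynomial.coeff_add, coeff_mul_fin_sum A f hA, coeff_mul_fin_sum B g hB]
  simp only [Matrix.mulVecLin_apply, Matrix.mulVec, dotProduct, sylMat,
    Fintype.sum_sum_type, Sum.elim_inl, Sum.elim_inr]

/-- triangular families are linearly independent -/
lemma tri_linearIndependent {K : Type*} [Field K] {n : ℕ} {α : Type*} (u : Fin n → α → K)
    (d : Fin n → α) (hdiag : ∀ i, u i (d i) ≠ 0)
    (hlt : ∀ i j : Fin n, i < j → u j (d i) = 0) : LinearIndependent K u := by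
  rw [Fintype.linearIndependent_iff]
  intro c hc
  have key : ∀ m : ℕ, ∀ i : Fin n, (i : ℕ) = m → c i = 0 := by
    intro m
    induction m using Nat.strong_induction_on with
    | _ m IHm =>
    intro i him
    have IH : ∀ j : Fin n, j < i → c j = 0 := fun j hj =>
      IHm (j : ℕ) (him ▸ hj) j rfl
    have h := congrFun hc (d i)
    simp only [Finset.sum_apply, Pi.smul_apply, smul_eq_mul, Pi.zero_apply] at h
    rw [Finset.sum_eq_single i] at h
    · exact (mul_eq_zero.1 h).resolve_right (hdiag i)
    · intro j _ hj
      rcases lt_or_gt_of_ne hj with hlt' | hgt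
      · rw [IH j hlt', zero_mul]
      · rw [hlt i j hgt, mul_zero]
    · intro hi; exact absurd (Finset.mem_univ i) hi
  exact fun i => key (i : ℕ) i rfl

lemma card_le_finrank_of_indep {K : Type*} [Field K] {V : Type*} [AddCommGroup V] [Module K V]
    [FiniteDimensional K V] {n : ℕ} (W : Submodule K V) (u : Fin n → V) (hu : ∀ i, u i ∈ W)
    (hind : LinearIndependent K u) : n ≤ Module.finrank K W := by
  have h : LinearIndependent K (fun i : Fin n => (⟨u i, hu i⟩ : W)) := by
    apply LinearIndependent.of_comp W.subtype
    exact hind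
  simpa using h.fintype_card_le_finrank

open Polynomial in
lemma degree_lt_of_natDegree_lt' {K : Type*} [Field K] {A : K[X]} {n : ℕ}
    (h : A.natDegree < n) : A.degree < (n : ℕ) :=
  lt_of_le_of_lt A.degree_le_natDegree (by exact_mod_cast h)

/-- For monic `f, g` of degrees `a ≤ b` and `0 ≤ p < a`, the truncated Sylvester matrix
`Syl_p(f,g)` has kernel of dimension `≥ p + 1` iff `deg gcd(f,g) ≥ p + 1`. -/
theorem stmt7 {k : Type*} [Field k] (f g : Polynomial k) (a b p : ℕ) (hab : a ≤ b)
    (hpa : p < a) (hf : f.Monic) (hg : g.Monic) (hfa : f.natDegree = a)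
    (hgb : g.natDegree = b) :
    p + 1 ≤ Module.finrank k (LinearMap.ker (sylMat f g a b p).mulVecLin) ↔
      p + 1 ≤ (@EuclideanDomain.gcd (Polynomial k) _ (Classical.decEq _) f g).natDegree := by
  have hf0 : f ≠ 0 := hf.ne_zero
  have hg0 : g ≠ 0 := hg.ne_zero
  set h : Polynomial k := @EuclideanDomain.gcd (Polynomial k) _ (Classical.decEq _) f g with hh
  have hh0 : h ≠ 0 := by
    intro h0
    exact hf0 ((@EuclideanDomain.gcd_eq_zero_iff (Polynomial k) _ (Classical.decEq _) f g).1 h0).1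
  set δ := h.natDegree with hδdef
  have hdvf : h ∣ f := @EuclideanDomain.gcd_dvd_left (Polynomial k) _ (Classical.decEq _) f g
  have hdvg : h ∣ g := @EuclideanDomain.gcd_dvd_right (Polynomial k) _ (Classical.decEq _) f g
  have hδa : δ ≤ a := hfa ▸ Polynomial.natDegree_le_of_dvd hdvf hf0
  have ha1 : 1 ≤ a := by omega
  constructor
  · -- dim ker ≥ p+1 → δ ≥ p+1, by contradiction
    intro hker
    by_contra hδc
    push_neg at hδc
    have hδp : δ ≤ p := by omega
    -- the triangular family in the range
    set u : Fin (a + b - p) → Fin (a + b - p) → k :=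
      fun r r' => (h * Polynomial.X ^ ((a + b - 1 - (r : ℕ)) - δ)).coeff (a + b - 1 - (r' : ℕ))
      with hu
    have hndeg : ∀ r : Fin (a + b - p),
        (h * Polynomial.X ^ ((a + b - 1 - (r : ℕ)) - δ)).natDegree = a + b - 1 - (r : ℕ) := by
      intro r
      rw [Polynomial.natDegree_mul_X_pow _ hh0]
      have := r.isLt
      omega
    have hmem : ∀ r, u r ∈ LinearMap.range (sylMat f g a b p).mulVecLin := by
      intro r
      set e : ℕ := (a + b - 1 - (r : ℕ)) - δ with he
      set uA : Polynomial k := @EuclideanDomain.gcdA (Polynomial k) _ (Classical.decEq _) f g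
      set vB : Polynomial k := @EuclideanDomain.gcdB (Polynomial k) _ (Classical.decEq _) f g
      have hBez : h = f * uA + g * vB :=
        @EuclideanDomain.gcd_eq_gcd_ab (Polynomial k) _ (Classical.decEq _) f g
      set B : Polynomial k := (vB * Polynomial.X ^ e) %ₘ f with hB
      set A : Polynomial k := uA * Polynomial.X ^ e + g * ((vB * Polynomial.X ^ e) /ₘ f)
        with hA
      have hdm : (vB * Polynomial.X ^ e) %ₘ f + f * ((vB * Polynomial.X ^ e) /ₘ f)
          = vB * Polynomial.X ^ e := Polynomial.modByMonic_add_div _ f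
      have hq : A * f + B * g = h * Polynomial.X ^ e := by
        rw [hA, hB]
        linear_combination (-(Polynomial.X ^ e)) * hBez + g * hdm
      have hdegf : f.degree = (a : ℕ) := by rw [Polynomial.degree_eq_natDegree hf0, hfa]
      have hBdeg : B.degree < (a : ℕ) := by
        rw [← hdegf]; exact Polynomial.degree_modByMonic_lt _ hf
      have hBnat : B.natDegree ≤ a - 1 := by
        by_cases hB0 : B = 0
        · simp [hB0]
        · have := (Polynomial.natDegree_lt_iff_degree_lt hB0).2 hBdeg
          omega
      have hAdeg : A.degree < (b : ℕ) := by
        by_cases hA0 : A = 0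
        · rw [hA0, Polynomial.degree_zero]
          exact WithBot.bot_lt_coe _
        refine degree_lt_of_natDegree_lt' ?_
        have hAf : A * f = h * Polynomial.X ^ e - B * g := eq_sub_of_add_eq hq
        have h1 : (A * f).natDegree = A.natDegree + a := by
          rw [Polynomial.natDegree_mul hA0 hf0, hfa]
        have h2 : (h * Polynomial.X ^ e - B * g).natDegree ≤ a + b - 1 := by
          refine le_trans (Polynomial.natDegree_sub_le _ _) ?_
          have h3 : (h * Polynomial.X ^ e).natDegree = δ + e := by
            rw [Polynomial.natDegree_mul_X_pow _ hh0]
          have h4 : (B * g).natDegree ≤ B.natDegree + b := by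
            refine le_trans (Polynomial.natDegree_mul_le) ?_
            rw [hgb]
          have := r.isLt
          simp only [max_le_iff]
          constructor <;> omega
        rw [hAf] at h1
        omega
      refine ⟨Sum.elim (fun j : Fin b => A.coeff j) (fun i : Fin a => B.coeff i), ?_⟩
      funext r'
      rw [sylMat_mulVec f g a b p A B hAdeg hBdeg r', hq]
    have hindep : LinearIndependent k u := by
      refine tri_linearIndependent u id ?_ ?_
      · intro r
        simp only [hu, id_eq]
        conv_lhs => enter [2]; rw [(hndeg r).symm]
        rw [Polynomial.coeff_natDegree, Polynomial.leadingCoeff_mul_X_pow]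
        exact Polynomial.leadingCoeff_ne_zero.2 hh0
      · intro i j hij
        simp only [hu, id_eq]
        refine Polynomial.coeff_eq_zero_of_natDegree_lt ?_
        rw [hndeg j]
        have hi := i.isLt
        have hj := j.isLt
        have hij' : (i : ℕ) < (j : ℕ) := hij
        omega
    have hrank : a + b - p ≤ Module.finrank k (LinearMap.range (sylMat f g a b p).mulVecLin) :=
      card_le_finrank_of_indep _ u hmem hindep
    have hrn := LinearMap.finrank_range_add_finrank_ker (sylMat f g a b p).mulVecLin
    rw [Module.finrank_fintype_fun_eq_card] at hrn
    simp only [Fintype.card_sum, Fintype.card_fin] at hrn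
    omega
  · -- δ ≥ p+1 → dim ker ≥ p+1
    intro hδ
    obtain ⟨f1, hf1⟩ := hdvf
    obtain ⟨g1, hg1⟩ := hdvg
    have hf10 : f1 ≠ 0 := by rintro rfl; rw [mul_zero] at hf1; exact hf0 hf1
    have hg10 : g1 ≠ 0 := by rintro rfl; rw [mul_zero] at hg1; exact hg0 hg1
    have hdegf1 : δ + f1.natDegree = a := by
      rw [← hfa, hf1, Polynomial.natDegree_mul hh0 hf10]
    have hdegg1 : δ + g1.natDegree = b := by
      rw [← hgb, hg1, Polynomial.natDegree_mul hh0 hg10]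
    set w : Fin (p + 1) → (Fin b ⊕ Fin a → k) := fun i =>
      Sum.elim (fun j : Fin b => (g1 * Polynomial.X ^ (i : ℕ)).coeff j)
        (fun j : Fin a => (-(f1 * Polynomial.X ^ (i : ℕ))).coeff j) with hw
    have hdegA : ∀ i : Fin (p + 1), (g1 * Polynomial.X ^ (i : ℕ)).natDegree
        = g1.natDegree + (i : ℕ) := fun i => Polynomial.natDegree_mul_X_pow _ hg10
    have hmem : ∀ i, w i ∈ LinearMap.ker (sylMat f g a b p).mulVecLin := by
      intro i
      rw [LinearMap.mem_ker]
      have hAd : (g1 * Polynomial.X ^ (i : ℕ)).degree < ((b : ℕ) : WithBot ℕ) := by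
        refine degree_lt_of_natDegree_lt' ?_
        rw [hdegA i]
        have := i.isLt
        omega
      have hBd : (-(f1 * Polynomial.X ^ (i : ℕ))).degree < ((a : ℕ) : WithBot ℕ) := by
        rw [Polynomial.degree_neg]
        refine degree_lt_of_natDegree_lt' ?_
        rw [Polynomial.natDegree_mul_X_pow _ hf10]
        have := i.isLt
        omega
      funext r
      rw [hw]
      rw [sylMat_mulVec f g a b p _ _ hAd hBd r]
      have hzero : g1 * Polynomial.X ^ (i : ℕ) * f
          + -(f1 * Polynomial.X ^ (i : ℕ)) * g = 0 := by
        rw [hf1, hg1]; ring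
      rw [hzero]
      simp
    have hindep : LinearIndependent k w := by
      rw [← linearIndependent_equiv (Fin.revPerm : Equiv.Perm (Fin (p + 1)))]
      have hpiv : ∀ i : Fin (p + 1), g1.natDegree + (Fin.rev i : ℕ) < b := by
        intro i
        have := (Fin.rev i).isLt
        omega
      refine tri_linearIndependent (w ∘ Fin.revPerm)
        (fun i => Sum.inl ⟨g1.natDegree + (Fin.rev i : ℕ), hpiv i⟩) ?_ ?_
      · intro i
        simp only [Function.comp_apply, hw, Fin.revPerm_apply, Sum.elim_inl]
        have h1 : (g1 * Polynomial.X ^ ((Fin.rev i : Fin (p+1)) : ℕ)).coeff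
            (g1.natDegree + (Fin.rev i : ℕ))
            = (g1 * Polynomial.X ^ ((Fin.rev i : Fin (p+1)) : ℕ)).leadingCoeff := by
          rw [← hdegA (Fin.rev i), Polynomial.coeff_natDegree]
        rw [h1, Polynomial.leadingCoeff_mul_X_pow]
        exact Polynomial.leadingCoeff_ne_zero.2 hg10
      · intro i j hij
        simp only [Function.comp_apply, hw, Fin.revPerm_apply, Sum.elim_inl]
        refine Polynomial.coeff_eq_zero_of_natDegree_lt ?_
        rw [hdegA (Fin.rev j)]
        have : Fin.rev j < Fin.rev i := Fin.rev_lt_rev.2 hij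
        have : (Fin.rev j : ℕ) < (Fin.rev i : ℕ) := this
        omega
    exact card_le_finrank_of_indep _ w hmem hindep
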